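/- Let A, B, X be bounded linear operators on a complex Hilbert space H with A and B self-adjoint, let m > 0 be a real number, and suppose X − mI is a positive operator. Then w(AX − XB) ≥ (1/2)‖(A − B)X + X(A − B)‖, where w denotes the numerical radius. -/

import Mathlib

/-- The numerical radius of a bounded linear operator. -/
noncomputable def numRadius {E : Type*} [NormedAddCommGroup E] [InnerProductSpace ℂ E]
    (T : E →L[ℂ] E) : ℝ :=
  ⨆ x : {x : E // ‖x‖ = 1}, ‖(inner ℂ (T x.val) x.val : ℂ)‖
theorem stmt_16 {H : Type*} [NormedAddCommGroup H] [InnerProductSpace ℂ H] [CompleteSpace H]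
    (A B X : H →L[ℂ] H) (hA : IsSelfAdjoint A) (hB : IsSelfAdjoint B)
    (m : ℝ) (hm : 0 < m)
    (hX : (X - (m : ℂ) • (1 : H →L[ℂ] H)).IsPositive) :
    numRadius (A * X - X * B) ≥ (1 / 2 : ℝ) * ‖(A - B) * X + X * (A - B)‖ := by
  set T := A * X - X * B with hTdef
  set S := (A - B) * X + X * (A - B) with hSdef
  -- X is self-adjoint
  have hXsa : IsSelfAdjoint X := by
    have h1 : IsSelfAdjoint ((m : ℂ) • (1 : H →L[ℂ] H)) := by
      rw [IsSelfAdjoint, star_smul]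
      simp [Complex.star_def, Complex.conj_ofReal]
    have h2 := hX.isSelfAdjoint
    have h3 : X = (X - (m : ℂ) • (1 : H →L[ℂ] H)) + (m : ℂ) • (1 : H →L[ℂ] H) := by abel
    rw [h3]; exact h2.add h1
  -- S = T + T*
  have hSsum : S = T + star T := by
    rw [hSdef, hTdef, star_sub, star_mul, star_mul, hA.star_eq, hB.star_eq, hXsa.star_eq]
    noncomm_ring
  -- S is self-adjoint
  have hSsa : IsSelfAdjoint S := by
    rw [hSsum, IsSelfAdjoint, star_add, star_star, add_comm]
  -- numRadius T ≥ 0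
  have hnr0 : 0 ≤ numRadius T := Real.iSup_nonneg fun x => norm_nonneg _
  set M : ℝ := 2 * numRadius T with hMdef
  have hM0 : 0 ≤ M := by positivity
  -- the sup family is bounded above
  have hbdd : BddAbove (Set.range fun x : {x : H // ‖x‖ = 1} =>
      ‖(inner ℂ (T x.val) x.val : ℂ)‖) := by
    refine ⟨‖T‖, ?_⟩
    rintro _ ⟨x, rfl⟩
    calc ‖(inner ℂ (T x.val) x.val : ℂ)‖ ≤ ‖T x.val‖ * ‖x.val‖ := norm_inner_le_norm _ _
      _ ≤ (‖T‖ * ‖x.val‖) * ‖x.val‖ := by gcongr; exact T.le_opNorm _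
      _ = ‖T‖ := by rw [x.2]; ring
  -- bound on |⟨Tz,z⟩|
  have hb : ∀ z : H, ‖(inner ℂ (T z) z : ℂ)‖ ≤ numRadius T * ‖z‖ ^ 2 := by
    intro z
    rcases eq_or_ne z 0 with rfl | hz
    · simp
    · have hzn : (0:ℝ) < ‖z‖ := norm_pos_iff.2 hz
      set u : H := ((‖z‖ : ℂ))⁻¹ • z with hu
      have hu1 : ‖u‖ = 1 := by
        rw [hu, norm_smul]
        simp [norm_inv, Complex.norm_real, abs_of_pos hzn]
        field_simp
      have h1 : ‖(inner ℂ (T u) u : ℂ)‖ ≤ numRadius T := le_ciSup hbdd ⟨u, hu1⟩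
      have h2 : (inner ℂ (T u) u : ℂ) = ((‖z‖ : ℂ))⁻¹ * ((‖z‖ : ℂ))⁻¹ * inner ℂ (T z) z := by
        rw [hu, map_smul, inner_smul_left, inner_smul_right]
        rw [map_inv₀, Complex.conj_ofReal]
        ring
      have h3 : ‖(inner ℂ (T u) u : ℂ)‖ = (‖z‖)⁻¹ * (‖z‖)⁻¹ * ‖(inner ℂ (T z) z : ℂ)‖ := by
        rw [h2]
        simp [norm_mul, Complex.norm_real, abs_of_pos hzn]
      rw [h3] at h1
      have := mul_le_mul_of_nonneg_left h1 (le_of_lt (mul_pos hzn hzn))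
      calc ‖(inner ℂ (T z) z : ℂ)‖
          = (‖z‖ * ‖z‖) * ((‖z‖)⁻¹ * (‖z‖)⁻¹ * ‖(inner ℂ (T z) z : ℂ)‖) := by
            field_simp
        _ ≤ (‖z‖ * ‖z‖) * numRadius T := this
        _ = numRadius T * ‖z‖ ^ 2 := by ring
  -- quadratic form bound for S
  have hq : ∀ z : H, |Complex.re (inner ℂ (S z) z : ℂ)| ≤ M * ‖z‖ ^ 2 := by
    intro z
    have h1 : (inner ℂ (S z) z : ℂ) = inner ℂ (T z) z + starRingEnd ℂ (inner ℂ (T z) z) := by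
      rw [hSsum]
      simp only [ContinuousLinearMap.add_apply, inner_add_left]
      rw [ContinuousLinearMap.star_eq_adjoint, ContinuousLinearMap.adjoint_inner_left,
        inner_conj_symm]
    have h2 : Complex.re (inner ℂ (S z) z : ℂ) = 2 * Complex.re (inner ℂ (T z) z : ℂ) := by
      rw [h1, Complex.add_conj]
      simp
    rw [h2, abs_mul, abs_two]
    have h3 : |Complex.re (inner ℂ (T z) z : ℂ)| ≤ ‖(inner ℂ (T z) z : ℂ)‖ :=
      Complex.abs_re_le_norm _
    calc 2 * |Complex.re (inner ℂ (T z) z : ℂ)| ≤ 2 * ‖(inner ℂ (T z) z : ℂ)‖ := by linarith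
      _ ≤ 2 * (numRadius T * ‖z‖ ^ 2) := by have := hb z; linarith
      _ = M * ‖z‖ ^ 2 := by rw [hMdef]; ring
  -- polarization: Re⟨Sx,y⟩ bound
  have hpol : ∀ x y : H, Complex.re (inner ℂ (S x) y : ℂ) ≤ M / 2 * (‖x‖ ^ 2 + ‖y‖ ^ 2) := by
    intro x y
    have hsym : (inner ℂ (S y) x : ℂ) = starRingEnd ℂ (inner ℂ (S x) y) := by
      rw [← hSsa.adjoint_eq, ContinuousLinearMap.adjoint_inner_left, inner_conj_symm,
        hSsa.adjoint_eq]
    have hre : Complex.re (inner ℂ (S y) x : ℂ) = Complex.re (inner ℂ (S x) y : ℂ) := by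
      rw [hsym, Complex.conj_re]
    have hexp : Complex.re (inner ℂ (S (x + y)) (x + y) : ℂ)
        - Complex.re (inner ℂ (S (x - y)) (x - y) : ℂ)
        = 4 * Complex.re (inner ℂ (S x) y : ℂ) := by
      have e1 : (inner ℂ (S (x + y)) (x + y) : ℂ)
          = inner ℂ (S x) x + inner ℂ (S x) y + inner ℂ (S y) x + inner ℂ (S y) y := by
        rw [map_add]
        simp only [inner_add_left, inner_add_right]
        ring
      have e2 : (inner ℂ (S (x - y)) (x - y) : ℂ)
          = inner ℂ (S x) x - inner ℂ (S x) y - inner ℂ (S y) x + inner ℂ (S y) y := by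
        rw [map_sub]
        simp only [inner_sub_left, inner_sub_right]
        ring
      rw [e1, e2]
      simp only [Complex.add_re, Complex.sub_re]
      rw [hre]; ring
    have hpar : ‖x + y‖ ^ 2 + ‖x - y‖ ^ 2 = 2 * (‖x‖ ^ 2 + ‖y‖ ^ 2) := by
      have := parallelogram_law_with_norm ℂ x y
      nlinarith [norm_nonneg (x+y), norm_nonneg (x-y)]
    have b1 := hq (x + y)
    have b2 := hq (x - y)
    have l1 : Complex.re (inner ℂ (S (x + y)) (x + y) : ℂ) ≤ M * ‖x + y‖ ^ 2 :=
      (abs_le.1 b1).2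
    have l2 : -(M * ‖x - y‖ ^ 2) ≤ Complex.re (inner ℂ (S (x - y)) (x - y) : ℂ) :=
      (abs_le.1 b2).1
    nlinarith
  -- norm bound for S
  have hSnorm : ‖S‖ ≤ M := by
    refine ContinuousLinearMap.opNorm_le_bound S hM0 fun x => ?_
    rcases eq_or_ne (S x) 0 with h0 | h0
    · rw [h0, norm_zero]; positivity
    · have hx0 : x ≠ 0 := by rintro rfl; simp at h0
      have hxn : (0:ℝ) < ‖x‖ := norm_pos_iff.2 hx0
      have hSxn : (0:ℝ) < ‖S x‖ := norm_pos_iff.2 h0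
      set y : H := ((‖x‖ * ‖S x‖⁻¹ : ℝ) : ℂ) • S x with hydef
      have hyn : ‖y‖ = ‖x‖ := by
        rw [hydef, norm_smul, Complex.norm_real, Real.norm_eq_abs,
          abs_of_pos (mul_pos hxn (inv_pos.2 hSxn))]
        field_simp
      have hiy : Complex.re (inner ℂ (S x) y : ℂ) = ‖x‖ * ‖S x‖ := by
        rw [hydef, inner_smul_right]
        have hss : (inner ℂ (S x) (S x) : ℂ) = ((‖S x‖ ^ 2 : ℝ) : ℂ) := by
          exact_mod_cast inner_self_eq_norm_sq_to_K (𝕜 := ℂ) (S x)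
        rw [Complex.re_ofReal_mul, hss, Complex.ofReal_re]
        field_simp
      have := hpol x y
      rw [hiy, hyn] at this
      have h4 : ‖x‖ * ‖S x‖ ≤ M * ‖x‖ ^ 2 := by nlinarith
      have := mul_le_mul_of_nonneg_left h4 (le_of_lt (inv_pos.2 hxn))
      calc ‖S x‖ = ‖x‖⁻¹ * (‖x‖ * ‖S x‖) := by field_simp
        _ ≤ ‖x‖⁻¹ * (M * ‖x‖ ^ 2) := this
        _ = M * ‖x‖ := by field_simp
  rw [ge_iff_le, hMdef] at *
  linarith
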